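/- For each B_min > 0 there exists B_max > 0, depending only on B_min, such that the following holds. Let E ⊂ ℝ² be a finite set, f : E → [0, ∞), M > 0, and let k′ ≥ 2 be an integer. Suppose that for every subset S ⊂ E with #S ≤ k′ there exists F^S ∈ C²₊(ℝ²) with ‖F^S‖_{C²(ℝ²)} ≤ M and F^S = f on S. Let Q be a square with side length δ_Q. Then at least one of the following holds: (A) f(x) ≤ B_max·M·δ_Q² for all x ∈ E ∩ Q*; or (B) f(x) ≥ B_min·M·δ_Q² for all x ∈ E ∩ Q*. -/

import Mathlib

noncomputable section

/-- The plane `ℝ²` with the Euclidean metric. -/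
abbrev V2 : Type := EuclideanSpace ℝ (Fin 2)

/-- Partial derivative of `F : ℝ² → ℝ` in the `i`-th coordinate direction. -/
noncomputable def pd (i : Fin 2) (F : V2 → ℝ) : V2 → ℝ :=
  fun x => fderiv ℝ F x (EuclideanSpace.single i 1)

/-- `Σ_{|α| ≤ 2} |∂^α F(x)|²`, the sum over all multi-indices `α` of order at most `2`. -/
noncomputable def c2SqAt (F : V2 → ℝ) (x : V2) : ℝ :=
  (F x) ^ 2 + (pd 0 F x) ^ 2 + (pd 1 F x) ^ 2 +
    (pd 0 (pd 0 F) x) ^ 2 + (pd 0 (pd 1 F) x) ^ 2 + (pd 1 (pd 1 F) x) ^ 2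

/-- `‖F‖_{C²(ℝ²)} := sup_x (Σ_{|α|≤2} |∂^α F(x)|²)^{1/2} ≤ M`. -/
def C2NormLE (F : V2 → ℝ) (M : ℝ) : Prop :=
  ∀ x : V2, Real.sqrt (c2SqAt F x) ≤ M

/-- The 1-jet of `F` at `x`: `𝒥_x F (y) = F(x) + ∇F(x) · (y − x)`. -/
noncomputable def jet (x : V2) (F : V2 → ℝ) : V2 → ℝ :=
  fun y => F x + fderiv ℝ F x (y - x)

/-- A (half-open) axis-parallel square `[s, s+len) × [t, t+len)` in `ℝ²`. -/
structure Sq where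
  s : ℝ
  t : ℝ
  len : ℝ

/-- The square `Q` itself, as a subset of `ℝ²`. -/
def Sq.carrier (Q : Sq) : Set V2 :=
  {p : V2 | Q.s ≤ p 0 ∧ p 0 < Q.s + Q.len ∧ Q.t ≤ p 1 ∧ p 1 < Q.t + Q.len}

/-- `Q* := 2Q`, the concentric double of `Q`. -/
def Sq.double (Q : Sq) : Set V2 :=
  {p : V2 | Q.s - Q.len / 2 ≤ p 0 ∧ p 0 < Q.s + 3 * Q.len / 2 ∧
            Q.t - Q.len / 2 ≤ p 1 ∧ p 1 < Q.t + 3 * Q.len / 2}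

lemma abs_le_of_sq_le_c2 {F : V2 → ℝ} {M a : ℝ} (h : C2NormLE F M) (x : V2)
    (ha : a ^ 2 ≤ c2SqAt F x) : |a| ≤ M := by
  have h0 := h x
  calc |a| = Real.sqrt (a ^ 2) := by rw [Real.sqrt_sq_eq_abs]
    _ ≤ Real.sqrt (c2SqAt F x) := Real.sqrt_le_sqrt ha
    _ ≤ M := h0

lemma c2_term_le {F : V2 → ℝ} {M : ℝ} (h : C2NormLE F M) (x : V2) :
    |F x| ≤ M ∧ |pd 0 (pd 0 F) x| ≤ M ∧ |pd 0 (pd 1 F) x| ≤ M ∧ |pd 1 (pd 1 F) x| ≤ M := by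
  refine ⟨abs_le_of_sq_le_c2 h x ?_, abs_le_of_sq_le_c2 h x ?_,
    abs_le_of_sq_le_c2 h x ?_, abs_le_of_sq_le_c2 h x ?_⟩ <;> · unfold c2SqAt; nlinarith [sq_nonneg (F x), sq_nonneg (pd 0 F x), sq_nonneg (pd 1 F x), sq_nonneg (pd 0 (pd 0 F) x), sq_nonneg (pd 0 (pd 1 F) x), sq_nonneg (pd 1 (pd 1 F) x)]

lemma normsq2 (v : V2) : ‖v‖ ^ 2 = v 0 ^ 2 + v 1 ^ 2 := by
  rw [EuclideanSpace.norm_eq, Real.sq_sqrt (by positivity)]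
  simp [Fin.sum_univ_two, sq_abs]

lemma pd_pd_eq {F : V2 → ℝ} (hF : ContDiff ℝ 2 F) (i j : Fin 2) (x : V2) :
    pd i (pd j F) x = fderiv ℝ (fderiv ℝ F) x (EuclideanSpace.single i 1) (EuclideanSpace.single j 1) := by
  have hdF : ContDiff ℝ 1 (fderiv ℝ F) := hF.fderiv_right (by norm_num)
  have hx : HasFDerivAt (fderiv ℝ F) (fderiv ℝ (fderiv ℝ F) x) x :=
    ((hdF.differentiable one_ne_zero) x).hasFDerivAt
  have h2 := (ContinuousLinearMap.apply ℝ ℝ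
      (EuclideanSpace.single (𝕜 := ℝ) j (1:ℝ))).hasFDerivAt.comp x hx
  have h3 : HasFDerivAt (pd j F)
      ((ContinuousLinearMap.apply ℝ ℝ (EuclideanSpace.single j 1)).comp
        (fderiv ℝ (fderiv ℝ F) x)) x := by
    exact h2
  simp [pd, h3.fderiv]

lemma decomp2 (v : V2) : v = v 0 • (EuclideanSpace.single (0:Fin 2) (1:ℝ)) + v 1 • (EuclideanSpace.single (1:Fin 2) (1:ℝ)) := by
  ext i
  fin_cases i <;> simp [EuclideanSpace.single_apply]

set_option maxHeartbeats 1000000 in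
lemma bilin_bound {F : V2 → ℝ} {M : ℝ} (hF : ContDiff ℝ 2 F) (hn : C2NormLE F M)
    (x v : V2) : |fderiv ℝ (fderiv ℝ F) x v v| ≤ 2 * M * ‖v‖ ^ 2 := by
  set B := fderiv ℝ (fderiv ℝ F) x with hB
  set e0 : V2 := EuclideanSpace.single (0:Fin 2) (1:ℝ)
  set e1 : V2 := EuclideanSpace.single (1:Fin 2) (1:ℝ)
  have hdiff : ∀ y, HasFDerivAt F (fderiv ℝ F y) y := fun y =>
    ((hF.differentiable (by norm_num)) y).hasFDerivAt
  have hdF : ContDiff ℝ 1 (fderiv ℝ F) := hF.fderiv_right (by norm_num)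
  have hx : HasFDerivAt (fderiv ℝ F) B x := ((hdF.differentiable one_ne_zero) x).hasFDerivAt
  have hsymm : B e1 e0 = B e0 e1 := second_derivative_symmetric hdiff hx e1 e0
  have h00 : |B e0 e0| ≤ M := by rw [← pd_pd_eq hF 0 0 x]; exact (c2_term_le hn x).2.1
  have h01 : |B e0 e1| ≤ M := by rw [← pd_pd_eq hF 0 1 x]; exact (c2_term_le hn x).2.2.1
  have h11 : |B e1 e1| ≤ M := by rw [← pd_pd_eq hF 1 1 x]; exact (c2_term_le hn x).2.2.2
  have hv : B v v = v 0 * v 0 * B e0 e0 + v 0 * v 1 * B e0 e1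
      + v 1 * v 0 * B e1 e0 + v 1 * v 1 * B e1 e1 := by
    conv_lhs => rw [decomp2 v]
    simp only [map_add, map_smul, ContinuousLinearMap.add_apply, ContinuousLinearMap.smul_apply,
      smul_eq_mul]
    ring
  have hnv := normsq2 v
  rw [hv, hsymm]
  rw [abs_le] at *
  constructor <;> nlinarith [sq_nonneg (v 0 + v 1), sq_nonneg (v 0 - v 1), sq_nonneg (v 0), sq_nonneg (v 1)]

lemma key_est {F : V2 → ℝ} {M : ℝ} (hF : ContDiff ℝ 2 F) (hpos : ∀ y, 0 ≤ F y)
    (hn : C2NormLE F M) (p q : V2) : F q ≤ 2 * F p + 4 * M * ‖q - p‖ ^ 2 := by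
  set v : V2 := q - p with hv
  set K : ℝ := 2 * M * ‖v‖ ^ 2 with hK
  have hM : 0 ≤ M := le_trans (Real.sqrt_nonneg _) (hn p)
  have hdF : ContDiff ℝ 1 (fderiv ℝ F) := hF.fderiv_right (by norm_num)
  set line : ℝ → V2 := fun t => p + t • v with hline
  have hlineD : ∀ t : ℝ, HasDerivAt line v t := by
    intro t
    have h := ((hasDerivAt_id t).smul_const v).const_add p
    rw [one_smul] at h
    exact h
  set g : ℝ → ℝ := fun t => F (line t) with hg
  set g1 : ℝ → ℝ := fun t => fderiv ℝ F (line t) v with hg1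
  have hgD : ∀ t : ℝ, HasDerivAt g (g1 t) t := fun t =>
    (((hF.differentiable (by norm_num)) (line t)).hasFDerivAt).comp_hasDerivAt t (hlineD t)
  have hg1D : ∀ t : ℝ, HasDerivAt g1 (fderiv ℝ (fderiv ℝ F) (line t) v v) t := by
    intro t
    have h1 : HasDerivAt (fun s => fderiv ℝ F (line s))
        (fderiv ℝ (fderiv ℝ F) (line t) v) t :=
      (((hdF.differentiable one_ne_zero) (line t)).hasFDerivAt).comp_hasDerivAt t (hlineD t)
    exact (ContinuousLinearMap.apply ℝ ℝ v).hasFDerivAt.comp_hasDerivAt t h1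
  -- g1 is K-Lipschitz on [-1,1]
  have hlip : ∀ t ∈ Set.Icc (-1:ℝ) 1, |g1 t - g1 0| ≤ K := by
    intro t ht
    have := (convex_Icc (-1:ℝ) 1).norm_image_sub_le_of_norm_hasDerivWithin_le
      (f := g1) (f' := fun s => fderiv ℝ (fderiv ℝ F) (line s) v v) (C := K)
      (fun s _ => (hg1D s).hasDerivWithinAt)
      (fun s _ => by simpa [hK] using bilin_bound hF hn (line s) v)
      (x := 0) (y := t) (by norm_num) ht
    calc |g1 t - g1 0| ≤ K * ‖t - 0‖ := this
      _ ≤ K * 1 := by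
          have hK0 : 0 ≤ K := by rw [hK]; positivity
          have : ‖t - 0‖ ≤ 1 := by
            rw [Real.norm_eq_abs, sub_zero, abs_le]; exact ⟨ht.1, ht.2⟩
          nlinarith
      _ = K := mul_one K
  -- φ
  set φ : ℝ → ℝ := fun t => g t - g 0 - t * g1 0 with hφ
  have hφD : ∀ t : ℝ, HasDerivAt φ (g1 t - g1 0) t := by
    intro t
    have h := ((hgD t).sub_const (g 0)).sub ((hasDerivAt_id t).mul_const (g1 0))
    rw [one_mul] at h
    exact h
  have hφbound : ∀ a ∈ Set.Icc (-1:ℝ) 1, |φ a - φ 0| ≤ K * ‖a - 0‖ := by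
    intro a ha
    exact (convex_Icc (-1:ℝ) 1).norm_image_sub_le_of_norm_hasDerivWithin_le
      (f := φ) (f' := fun s => g1 s - g1 0) (C := K)
      (fun s _ => (hφD s).hasDerivWithinAt)
      (fun s hs => by simpa using hlip s hs)
      (x := 0) (y := a) (by norm_num) ha
  have hφ0 : φ 0 = 0 := by simp [hφ]
  have h1 : |φ 1 - φ 0| ≤ K * 1 := by
    simpa using hφbound 1 (by norm_num)
  have h2 : |φ (-1) - φ 0| ≤ K * 1 := by
    have := hφbound (-1) (by norm_num)
    simpa using this
  have hline1 : line 1 = q := by simp [hline, hv]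
  have hline0 : line 0 = p := by simp [hline]
  have hgm1 : 0 ≤ g (-1) := hpos _
  have hg0 : g 0 = F p := by rw [hg]; simp [hline0]
  have hgq : g 1 = F q := by rw [hg]; simp [hline1]
  rw [hφ0] at h1 h2
  have e1 : φ 1 = g 1 - g 0 - g1 0 := by simp [hφ]
  have e2 : φ (-1) = g (-1) - g 0 + g1 0 := by simp only [hφ]; ring
  rw [e1] at h1; rw [e2] at h2
  rw [abs_le] at h1 h2
  have : F q ≤ 2 * F p + 2 * K := by
    rw [← hgq, ← hg0]; linarith [h1.2, h2.2, hgm1]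
  calc F q ≤ 2 * F p + 2 * K := this
    _ = 2 * F p + 4 * M * ‖q - p‖ ^ 2 := by rw [hK, hv]; ring


/-- **Lemma 7.5 (dichotomy: the local data is uniformly big or uniformly small).**
For each `B_min > 0` there is `B_max > 0`, depending only on `B_min`, such that if every
at-most-`k′`-point subset of `E` (`k′ ≥ 2`) admits a nonnegative `C²` interpolant of norm
at most `M`, then for every square `Q`, either `f ≤ B_max·M·δ_Q²` on all of `E ∩ Q*`, or
`f ≥ B_min·M·δ_Q²` on all of `E ∩ Q*`. -/
theorem local_data_dichotomy :
    ∀ Bmin : ℝ, 0 < Bmin →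
      ∃ Bmax : ℝ, 0 < Bmax ∧
        ∀ (E : Finset V2) (f : V2 → ℝ) (M : ℝ) (k' : ℕ) (Q : Sq),
          (∀ y ∈ E, 0 ≤ f y) → 0 < M → 2 ≤ k' → 0 < Q.len →
          (∀ S : Finset V2, S ⊆ E → S.card ≤ k' →
            ∃ FS : V2 → ℝ, ContDiff ℝ 2 FS ∧ (∀ y : V2, 0 ≤ FS y) ∧
              C2NormLE FS M ∧ (∀ x ∈ S, FS x = f x)) →
          (∀ x ∈ E, (x : V2) ∈ Q.double → f x ≤ Bmax * M * Q.len ^ 2) ∨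
          (∀ x ∈ E, (x : V2) ∈ Q.double → Bmin * M * Q.len ^ 2 ≤ f x) := by
  classical
  intro Bmin hBmin
  refine ⟨2 * Bmin + 32, by linarith, ?_⟩
  intro E f M k' Q hf hM hk hQ hint
  by_cases hB : ∀ x ∈ E, (x : V2) ∈ Q.double → Bmin * M * Q.len ^ 2 ≤ f x
  · exact Or.inr hB
  left
  push_neg at hB
  obtain ⟨x₀, hx₀E, hx₀Q, hx₀⟩ := hB
  intro x hxE hxQ
  obtain ⟨FS, hFS, hFSpos, hFSn, hFSeq⟩ := hint {x₀, x}
    (by intro y hy; simp only [Finset.mem_insert, Finset.mem_singleton] at hy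
        rcases hy with h | h <;> subst h <;> assumption)
    (le_trans ((Finset.card_insert_le _ _).trans (by simp)) hk)
  have h1 : FS x = f x := hFSeq x (by simp)
  have h2 : FS x₀ = f x₀ := hFSeq x₀ (by simp)
  have hkey := key_est hFS hFSpos hFSn x₀ x
  obtain ⟨a1, a2, a3, a4⟩ := hxQ
  obtain ⟨b1, b2, b3, b4⟩ := hx₀Q
  have hdist : ‖x - x₀‖ ^ 2 ≤ 8 * Q.len ^ 2 := by
    rw [normsq2]
    have e0 : (x - x₀) 0 = x 0 - x₀ 0 := rfl
    have e1 : (x - x₀) 1 = x 1 - x₀ 1 := rfl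
    rw [e0, e1]
    nlinarith
  rw [h1, h2] at hkey
  nlinarith
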